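/- In the graph X_{k,t} (for k ≥ 3 and even t ≥ 4, constructed by inserting copies of K_{k+1} − e into each edge of the multigraph Y_{k,t}), for each odd i and each j ∈ {1,2}, the pair {e_i^j, e_{i+1}^j} is a vertex cut of the line graph L(X_{k,t}); consequently, in any Hamilton decomposition of L(X_{k,t}), each Hamilton cycle contains exactly one of the k-1 edges of L(X_{k,t}) joining e_i^j to the k-1 edges of the inserted copy X_i^j adjacent to e_i^j. -/

import Mathlib

open SimpleGraph
open scoped Classical

universe u v'

variable {V : Type*}

/-- `G` is regular of degree `k`. -/
def RegularDeg (G : SimpleGraph V) (k : ℕ) : Prop :=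
  ∀ v, Nat.card (G.neighborSet v) = k

/-- A family of `n` pairwise edge-disjoint Hamilton cycles in `G`. -/
def IsHamDecompFam (G : SimpleGraph V) {n : ℕ} (x : Fin n → V)
    (c : ∀ i, G.Walk (x i) (x i)) : Prop :=
  (∀ i, (c i).IsHamiltonianCycle) ∧
    ∀ i j, i ≠ j → ∀ e, e ∈ (c i).edges → e ∉ (c j).edges

/-- `G` contains `n` pairwise edge-disjoint Hamilton cycles. -/
def EdgeDisjointHamCycles (G : SimpleGraph V) (n : ℕ) : Prop :=
  ∃ (x : Fin n → V) (c : ∀ i, G.Walk (x i) (x i)), IsHamDecompFam G x c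

/-- A graph regular of degree `2k` or `2k+1` is Hamilton decomposable if it contains a set of
`k` pairwise edge-disjoint Hamilton cycles. -/
def HamiltonDecomposable (G : SimpleGraph V) : Prop :=
  ∃ k : ℕ, (RegularDeg G (2 * k) ∨ RegularDeg G (2 * k + 1)) ∧ EdgeDisjointHamCycles G k

/-- A multigraph: a vertex type, an edge type, and an assignment of (unordered) endpoints. -/
structure Multigraph : Type (max (u + 1) (v' + 1)) where
  V : Type u
  E : Type v'
  ends : E → Sym2 V

namespace Multigraph

variable (M : Multigraph)

/-- `M` has no loops. -/
def Loopless : Prop := ∀ e, ¬ (M.ends e).IsDiag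

/-- The degree of a vertex of a (loopless) multigraph: number of incident edges. -/
noncomputable def deg (v : M.V) : ℕ := Nat.card {e : M.E // v ∈ M.ends e}

/-- `M` is `k`-regular. -/
def Regular (k : ℕ) : Prop := ∀ v, M.deg v = k

/-- The underlying simple graph of `M`: adjacency given by existence of a connecting edge. -/
def toSG : SimpleGraph M.V where
  Adj x y := x ≠ y ∧ ∃ e, M.ends e = s(x, y)
  symm := ⟨by
    rintro x y ⟨hxy, e, he⟩
    exact ⟨hxy.symm, e, he.trans (Sym2.eq_swap)⟩⟩
  loopless := ⟨fun x h => h.1 rfl⟩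

/-- `M` is connected. -/
def Connected : Prop := M.toSG.Connected

/-- The line graph of a multigraph: vertices are edges, adjacency is sharing an endpoint. -/
def lineSG : SimpleGraph M.E where
  Adj e f := e ≠ f ∧ ∃ w, w ∈ M.ends e ∧ w ∈ M.ends f
  symm := ⟨by rintro e f ⟨hef, w, h1, h2⟩; exact ⟨hef.symm, w, h2, h1⟩⟩
  loopless := ⟨fun e h => h.1 rfl⟩

/-- A transition at a vertex `u`: a pair of (distinct) half-edges incident with `u`
(in a loopless multigraph, a pair of distinct edges incident with `u`). -/
structure Transition (M : Multigraph) where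
  u : M.V
  e₁ : M.E
  e₂ : M.E
  ne : e₁ ≠ e₂
  mem₁ : u ∈ M.ends e₁
  mem₂ : u ∈ M.ends e₂

/-- Endpoints of edges after splitting the vertex `t.u` into two vertices: the new vertex
`Sum.inr ()` receives the two half-edges of the transition `t`, and `Sum.inl t.u` keeps the
remaining half-edges at `t.u`. -/
noncomputable def splitEnds (t : M.Transition) (e : M.E) : Sym2 (M.V ⊕ Unit) :=
  if e = t.e₁ ∨ e = t.e₂ then
    Sym2.map (fun w => if w = t.u then Sum.inr () else Sum.inl w) (M.ends e)
  else Sym2.map Sum.inl (M.ends e)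

/-- The multigraph `M^t` obtained by splitting at the transition `t`. -/
noncomputable def split (t : M.Transition) : Multigraph where
  V := M.V ⊕ Unit
  E := M.E
  ends := M.splitEnds t

/-- A transition is separating if splitting at it increases the number of
connected components. -/
def IsSeparating (t : M.Transition) : Prop :=
  Nat.card (M.split t).toSG.ConnectedComponent > Nat.card M.toSG.ConnectedComponent

end Multigraph

/-- The multigraph underlying a simple graph. -/
def SimpleGraph.toMulti (G : SimpleGraph V) : Multigraph := ⟨V, G.edgeSet, Subtype.val⟩

/-- `G` has no separating transitions. -/
def NoSeparatingTransition (G : SimpleGraph V) : Prop :=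
  ∀ t : Multigraph.Transition G.toMulti, ¬ G.toMulti.IsSeparating t

/-- The multiplicity of the bundle of parallel edges of `Y_{k,t}` joining `vᵢ` to `vᵢ₊₁`
(`0`-indexed: `2` parallel edges when `i` is even, `k - 2` when `i` is odd). -/
def mult (k : ℕ) {t : ℕ} (i : Fin t) : ℕ := if (i : ℕ) % 2 = 0 then 2 else k - 2

/-- Vertices of `X_{k,t}`: the vertices `v₁, …, v_t` of `Y_{k,t}`, together with, for each
edge of `Y_{k,t}`, the `k+1` vertices of the copy of `K_{k+1} - e` inserted into it. -/
def XktVert (k t : ℕ) : Type :=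
  Fin t ⊕ ((Σ i : Fin t, Fin (mult k i)) × Fin (k + 1))

/-- The graph `X_{k,t}` obtained from `Y_{k,t}` by inserting a copy of `K_{k+1} - e` into each
edge.  The copy inserted into the `j`-th parallel edge joining `vᵢ` to `vᵢ₊₁` is a complete
graph on the `k+1` vertices `(⟨i, j⟩, a)`, `a : Fin (k+1)`, minus the edge joining
`(⟨i, j⟩, 0)` to `(⟨i, j⟩, 1)`; the vertex `(⟨i, j⟩, 0)` is joined to `vᵢ` and the vertex
`(⟨i, j⟩, 1)` is joined to `vᵢ₊₁`. -/
def Xkt (k t : ℕ) : SimpleGraph (XktVert k t) :=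
  SimpleGraph.fromRel (fun x y =>
    match x, y with
    | Sum.inl i, Sum.inr (⟨i', _⟩, a) =>
        (i' = i ∧ a = 0) ∨ ((i : ℕ) = ((i' : ℕ) + 1) % t ∧ a = 1)
    | Sum.inr (g, a), Sum.inr (g', b) => g = g' ∧ s(a, b) ≠ s((0 : Fin (k + 1)), 1)
    | _, _ => False)

/-- A vertex cut of a connected graph: a set of vertices whose removal disconnects it. -/
def IsVertexCut {W : Type*} (G : SimpleGraph W) (S : Set W) : Prop :=
  G.Connected ∧ ¬ (G.induce Sᶜ).Connected


section Aux

section WalkLemmas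
variable {V : Type*} {G : SimpleGraph V}

lemma walk_cons_of_ne {a b : V} (w : G.Walk a b) (h : a ≠ b) :
    ∃ (x : V) (hx : G.Adj a x) (r : G.Walk x b), w = Walk.cons hx r := by
  cases w with
  | nil => exact absurd rfl h
  | cons hx r => exact ⟨_, hx, r, rfl⟩

lemma walk_cons_of_ne_nil {a : V} (w : G.Walk a a) (h : w ≠ Walk.nil) :
    ∃ (x : V) (hx : G.Adj a x) (r : G.Walk x a), w = Walk.cons hx r := by
  cases w with
  | nil => exact absurd rfl h
  | cons hx r => exact ⟨_, hx, r, rfl⟩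

lemma mem_support_of_mem_edges' {a b v : V} (w : G.Walk a b) {e : Sym2 V}
    (he : e ∈ w.edges) (hv : v ∈ e) : v ∈ w.support := by
  induction e with
  | _ x y =>
    rcases Sym2.mem_iff.1 hv with rfl | rfl
    · exact w.fst_mem_support_of_mem_edges he
    · exact w.snd_mem_support_of_mem_edges he

lemma path_start_edge {a b : V} {w : G.Walk a b} (hw : w.IsPath) {e : Sym2 V}
    (he : e ∈ w.edges) (ha : a ∈ e) :
    ∃ (x : V) (hx : G.Adj a x) (r : G.Walk x b), w = Walk.cons hx r ∧ e = s(a, x) := by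
  cases w with
  | nil => simp at he
  | cons hx r =>
    rw [Walk.edges_cons, List.mem_cons] at he
    rcases he with rfl | he
    · exact ⟨_, hx, r, rfl, rfl⟩
    · exact absurd (mem_support_of_mem_edges' r he ha)
        ((Walk.cons_isPath_iff _ _).1 hw).2

lemma path_end_edge {a b : V} {w : G.Walk a b} (hw : w.IsPath) {e : Sym2 V}
    (he : e ∈ w.edges) (hb : b ∈ e) :
    ∃ (x : V) (hx : G.Adj b x) (r : G.Walk x a), w.reverse = Walk.cons hx r ∧ e = s(b, x) := by
  have he' : e ∈ w.reverse.edges := by rw [Walk.edges_reverse, List.mem_reverse]; exact he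
  exact path_start_edge hw.reverse he' hb

lemma closed_mem_support_tail {a : V} {w : G.Walk a a} (hne : w ≠ Walk.nil) {v : V}
    (hv : v ∈ w.support) : v ∈ w.support.tail := by
  obtain ⟨x, hx, r, rfl⟩ := walk_cons_of_ne_nil w hne
  rw [Walk.support_cons, List.tail_cons]
  rw [Walk.support_cons, List.mem_cons] at hv
  rcases hv with rfl | hv
  · exact r.end_mem_support
  · exact hv

lemma lineGraph_reach_of_shared (e f : G.edgeSet) {u : V} (hu : u ∈ (e : Sym2 V))
    (hv : u ∈ (f : Sym2 V)) : G.lineGraph.Reachable e f := by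
  by_cases h : e = f
  · exact h ▸ Reachable.refl e
  · exact (lineGraph_adj_iff_exists.2 ⟨h, u, hu, hv⟩).reachable

lemma lineGraph_reachable_aux {u v : V} (w : G.Walk u v) :
    ∀ (e f : G.edgeSet), u ∈ (e : Sym2 V) → v ∈ (f : Sym2 V) →
      G.lineGraph.Reachable e f := by
  induction w with
  | nil => exact fun e f hu hv => lineGraph_reach_of_shared e f hu hv
  | @cons a b c h p ih =>
    intro e f hu hv
    have hd : s(a, b) ∈ G.edgeSet := h
    refine (lineGraph_reach_of_shared e ⟨s(a,b), hd⟩ hu (by simp)).trans ?_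
    exact ih ⟨s(a,b), hd⟩ f (by simp) hv

lemma edge_endpoints (e : G.edgeSet) : ∃ u v : V, (e : Sym2 V) = s(u, v) := by
  obtain ⟨ev, he⟩ := e
  induction ev with
  | _ x y => exact ⟨x, y, rfl⟩

lemma lineGraph_connected (hG : G.Preconnected) (hne : Nonempty G.edgeSet) :
    G.lineGraph.Connected := by
  refine Connected.mk (G := G.lineGraph) ?_
  intro e f
  obtain ⟨u, u', heu⟩ := edge_endpoints e
  obtain ⟨v, v', hfv⟩ := edge_endpoints f
  obtain ⟨w⟩ := hG u v
  exact lineGraph_reachable_aux w e f (by rw [heu]; simp) (by rw [hfv]; simp)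

end WalkLemmas

end Aux

section XktAdj
variable {k t : ℕ}

lemma xkt_adj_inl_inr {i' i₀ : Fin t} {j₀ : Fin (mult k i₀)} {a : Fin (k+1)} :
    (Xkt k t).Adj (Sum.inl i') (Sum.inr (⟨i₀, j₀⟩, a)) ↔
      (i₀ = i' ∧ a = 0) ∨ ((i' : ℕ) = ((i₀ : ℕ) + 1) % t ∧ a = 1) := by
  erw [Xkt, fromRel_adj]
  constructor
  · rintro ⟨-, h | h⟩
    · exact h
    · exact h.elim
  · intro h
    refine ⟨(by intro h; cases h), Or.inl h⟩

lemma xkt_not_adj_inl_inl {i' i'' : Fin t} :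
    ¬ (Xkt k t).Adj (Sum.inl i') (Sum.inl i'') := by
  erw [Xkt, fromRel_adj]
  rintro ⟨-, h | h⟩ <;> exact h

lemma xkt_adj_inr_inr {g g' : Σ i : Fin t, Fin (mult k i)} {a b : Fin (k+1)} :
    (Xkt k t).Adj (Sum.inr (g, a)) (Sum.inr (g', b)) ↔
      (g, a) ≠ (g', b) ∧ g = g' ∧ s(a, b) ≠ s((0 : Fin (k + 1)), 1) := by
  erw [Xkt, fromRel_adj]
  constructor
  · rintro ⟨hne, h | h⟩
    · exact ⟨fun hh => hne (by rw [hh]), h⟩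
    · refine ⟨fun hh => hne (by rw [hh]), h.1.symm, fun hc => h.2 ?_⟩
      rw [Sym2.eq_swap]; exact hc
  · rintro ⟨hne, h⟩
    exact ⟨fun hh => hne (Sum.inr.inj hh), Or.inl h⟩

end XktAdj

section XktConn
variable {k t : ℕ}

lemma mult_pos (hk : 3 ≤ k) (i' : Fin t) : 0 < mult k i' := by
  unfold mult; split <;> omega

lemma fin_val_one (hk : 3 ≤ k) : ((1 : Fin (k+1)) : ℕ) = 1 := by
  rw [Fin.val_one']; exact Nat.mod_eq_of_lt (by omega)

lemma xkt_adj_gadget (g : Σ i : Fin t, Fin (mult k i)) {a b : Fin (k+1)}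
    (hab : a ≠ b) (h01 : s(a, b) ≠ s((0 : Fin (k+1)), 1)) :
    (Xkt k t).Adj (Sum.inr (g, a)) (Sum.inr (g, b)) :=
  xkt_adj_inr_inr.2 ⟨fun h => hab (by injection h), rfl, h01⟩

lemma reach_gadget (hk : 3 ≤ k) (g : Σ i : Fin t, Fin (mult k i)) (a : Fin (k+1)) :
    (Xkt k t).Reachable (Sum.inl g.1) (Sum.inr (g, a)) := by
  have h2 : 2 < k + 1 := by omega
  set v2 : Fin (k+1) := ⟨2, h2⟩ with hv2
  have h1v : ((1 : Fin (k+1)) : ℕ) = 1 := fin_val_one hk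
  have h0v : ((0 : Fin (k+1)) : ℕ) = 0 := Fin.val_zero _
  have adj0 : (Xkt k t).Adj (Sum.inl g.1) (Sum.inr (g, 0)) := by
    obtain ⟨i₀, j₀⟩ := g
    exact xkt_adj_inl_inr.2 (Or.inl ⟨rfl, rfl⟩)
  have hne : ∀ a b : Fin (k+1), (a : ℕ) ≠ (b : ℕ) → a ≠ b :=
    fun a b h => Fin.ne_of_val_ne h
  have hs : ∀ a b : Fin (k+1), ¬((a : ℕ) = 0 ∧ (b : ℕ) = 1) → ¬((a : ℕ) = 1 ∧ (b : ℕ) = 0) →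
      s(a, b) ≠ s((0 : Fin (k+1)), 1) := by
    intro a b hab hba h
    rw [Sym2.eq_iff] at h
    rcases h with ⟨ha, hb⟩ | ⟨ha, hb⟩
    · exact hab ⟨by rw [ha, h0v], by rw [hb, h1v]⟩
    · exact hba ⟨by rw [ha, h1v], by rw [hb, h0v]⟩
  have adj02 : (Xkt k t).Adj (Sum.inr (g, 0)) (Sum.inr (g, v2)) :=
    xkt_adj_gadget g (hne _ _ (by simp [hv2, h0v])) (hs _ _ (by simp [hv2, h0v]) (by simp [h0v]))
  have adj21 : (Xkt k t).Adj (Sum.inr (g, v2)) (Sum.inr (g, 1)) :=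
    xkt_adj_gadget g (hne _ _ (by rw [h1v]; simp [hv2])) (hs _ _ (by rw [h1v]; simp [hv2]) (by rw [h1v]; simp [hv2]))
  by_cases ha0 : a = 0
  · subst ha0; exact adj0.reachable
  by_cases ha1 : a = 1
  · subst ha1
    exact adj0.reachable.trans (adj02.reachable.trans adj21.reachable)
  · refine adj0.reachable.trans (Adj.reachable ?_)
    refine xkt_adj_gadget g (Ne.symm ha0) (hs _ _ ?_ ?_)
    · rintro ⟨-, hb⟩; exact ha1 (Fin.ext (by rw [hb, h1v]))
    · rintro ⟨h1, -⟩; rw [h0v] at h1; omega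
  done

lemma reach_next (hk : 3 ≤ k) (ht4 : 4 ≤ t) (i' : Fin t) :
    (Xkt k t).Reachable (Sum.inl i')
      (Sum.inl ⟨((i' : ℕ) + 1) % t, Nat.mod_lt _ (by omega)⟩) := by
  set j₀ : Fin (mult k i') := ⟨0, mult_pos hk i'⟩
  have h1 : (Xkt k t).Reachable (Sum.inl i') (Sum.inr (⟨⟨i', j₀⟩, 1⟩)) :=
    reach_gadget hk ⟨i', j₀⟩ 1
  have h2 : (Xkt k t).Adj (Sum.inl (⟨((i' : ℕ) + 1) % t, Nat.mod_lt _ (by omega)⟩ : Fin t))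
      (Sum.inr (⟨⟨i', j₀⟩, 1⟩)) :=
    xkt_adj_inl_inr.2 (Or.inr ⟨rfl, rfl⟩)
  exact h1.trans h2.reachable.symm

lemma reach_inl (hk : 3 ≤ k) (ht4 : 4 ≤ t) :
    ∀ n (hn : n < t), (Xkt k t).Reachable (Sum.inl ⟨0, by omega⟩) (Sum.inl ⟨n, hn⟩) := by
  intro n
  induction n with
  | zero => intro hn; exact Reachable.refl _
  | succ m ih =>
    intro hn
    have hm : m < t := by omega
    have := reach_next hk ht4 ⟨m, hm⟩
    have heq : (⟨(m + 1) % t, Nat.mod_lt _ (by omega : 0 < t)⟩ : Fin t) = ⟨m + 1, hn⟩ :=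
      Fin.ext (Nat.mod_eq_of_lt hn)
    exact (ih hm).trans (heq ▸ this)

lemma xkt_connected (hk : 3 ≤ k) (ht4 : 4 ≤ t) : (Xkt k t).Connected := by
  have ht0 : (0 : ℕ) < t := by omega
  have key : ∀ v : XktVert k t, (Xkt k t).Reachable (Sum.inl ⟨0, ht0⟩) v := by
    intro v
    cases v with
    | inl i' => have := reach_inl hk ht4 (i' : ℕ) i'.isLt; simpa using this
    | inr p =>
      obtain ⟨g, a⟩ := p
      have h1 := reach_inl hk ht4 (g.1 : ℕ) g.1.isLt
      have h2 := reach_gadget hk g a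
      simp only [Fin.eta] at h1
      exact h1.trans h2
  have hne : Nonempty (XktVert k t) := ⟨Sum.inl ⟨0, ht0⟩⟩
  exact Connected.mk (fun u v => (key u).symm.trans (key v))

section Cut
variable {k t : ℕ}

def SS {k t : ℕ} (i : Fin t) (j : Fin (mult k i)) : Set (Xkt k t).edgeSet :=
  {f | ∃ a b : Fin (k+1),
    (f : Sym2 (XktVert k t)) = s(Sum.inr (⟨i, j⟩, a), Sum.inr (⟨i, j⟩, b))}

variable (hk : 3 ≤ k) (ht : 4 ≤ t) (hte : Even t)
  {i : Fin t} (hi : (i : ℕ) % 2 = 0) {j : Fin (mult k i)}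
  {E₁ E₂ : (Xkt k t).edgeSet}
  (hE₁ : (E₁ : Sym2 (XktVert k t)) = s(Sum.inl i, Sum.inr (⟨i, j⟩, (0 : Fin (k + 1)))))
  {i₁ : Fin t} (hi₁ : (i₁ : ℕ) = ((i : ℕ) + 1) % t)
  (hE₂ : (E₂ : Sym2 (XktVert k t)) =
    s(Sum.inl i₁, Sum.inr (⟨i, j⟩, (1 : Fin (k + 1)))))

include hte hi hi₁ in
lemma i1_eq : (i₁ : ℕ) = (i : ℕ) + 1 := by
  have h1 : (i : ℕ) < t := i.isLt
  have h2 : t % 2 = 0 := Nat.even_iff.1 hte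
  have h3 : (i : ℕ) + 1 < t := by omega
  rw [hi₁, Nat.mod_eq_of_lt h3]

include hte hi hi₁ in
lemma i_ne_i1 : i ≠ i₁ := by
  intro h
  have := i1_eq hte hi hi₁
  rw [← h] at this
  omega

include hE₁ hE₂ hte hi hi₁ in
lemma E1_ne_E2 : E₁ ≠ E₂ := by
  intro h
  have h' := congrArg Subtype.val h
  erw [hE₁, hE₂, Sym2.eq_iff] at h'
  rcases h' with ⟨h1, -⟩ | ⟨h1, -⟩
  · exact i_ne_i1 hte hi hi₁ (Sum.inl.inj h1)
  · cases h1

include hk hE₁ hE₂ hte hi hi₁ in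
lemma not_adj_E1_E2 : ¬ (Xkt k t).lineGraph.Adj E₁ E₂ := by
  rw [SimpleGraph.lineGraph_adj_iff_exists]
  rintro ⟨-, v, hv1, hv2⟩
  rw [hE₁] at hv1; rw [hE₂] at hv2
  rcases Sym2.mem_iff.1 hv1 with rfl | rfl <;> rcases Sym2.mem_iff.1 hv2 with h | h
  · exact i_ne_i1 hte hi hi₁ (Sum.inl.inj h)
  · cases h
  · cases h
  · have h' : (0 : Fin (k+1)) = 1 := (Prod.ext_iff.1 (Sum.inr.inj h)).2
    have h0 := congrArg Fin.val h'
    rw [fin_val_one hk, Fin.val_zero] at h0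
    omega

include hi₁ in
lemma adj_aux {a : Fin (k+1)} {u : XktVert k t}
    (h : (Xkt k t).Adj (Sum.inr (⟨i, j⟩, a)) u) :
    (∃ b, u = Sum.inr (⟨i, j⟩, b)) ∨ (u = Sum.inl i ∧ a = 0) ∨ (u = Sum.inl i₁ ∧ a = 1) := by
  cases u with
  | inl i' =>
    rcases xkt_adj_inl_inr.1 h.symm with ⟨h1, h2⟩ | ⟨h1, h2⟩
    · exact Or.inr (Or.inl ⟨by rw [h1], h2⟩)
    · refine Or.inr (Or.inr ⟨?_, h2⟩)
      have : i' = i₁ := Fin.val_injective (by rw [h1, hi₁])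
      rw [this]
  | inr p =>
    obtain ⟨g', b⟩ := p
    rcases xkt_adj_inr_inr.1 h with ⟨-, h1, -⟩
    exact Or.inl ⟨b, by rw [← h1]⟩

include hE₁ hi₁ hE₂ in
lemma boundary (f : (Xkt k t).edgeSet) (a : Fin (k+1))
    (ha : Sum.inr (⟨i, j⟩, a) ∈ (f : Sym2 (XktVert k t))) :
    f ∈ SS i j ∨ f = E₁ ∨ f = E₂ := by
  obtain ⟨u, v, huv⟩ := edge_endpoints f
  have hadj : (Xkt k t).Adj u v := by
    rw [← SimpleGraph.mem_edgeSet, ← huv]; exact f.2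
  rw [huv] at ha
  rcases Sym2.mem_iff.1 ha with rfl | rfl
  · rcases adj_aux hi₁ hadj with ⟨b, rfl⟩ | ⟨rfl, rfl⟩ | ⟨rfl, rfl⟩
    · exact Or.inl ⟨a, b, huv⟩
    · refine Or.inr (Or.inl (Subtype.ext ?_))
      rw [huv, hE₁, Sym2.eq_swap]
      rfl
    · refine Or.inr (Or.inr (Subtype.ext ?_))
      rw [huv, hE₂, Sym2.eq_swap]
      rfl
  · rcases adj_aux hi₁ hadj.symm with ⟨b, rfl⟩ | ⟨rfl, rfl⟩ | ⟨rfl, rfl⟩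
    · exact Or.inl ⟨b, a, huv⟩
    · exact Or.inr (Or.inl (Subtype.ext (by rw [huv, hE₁]; rfl)))
    · exact Or.inr (Or.inr (Subtype.ext (by rw [huv, hE₂]; rfl)))

include hE₁ hi₁ hE₂ in
lemma stepS {f g : (Xkt k t).edgeSet} (hadj : (Xkt k t).lineGraph.Adj f g)
    (hf : f ∈ SS i j) : g ∈ SS i j ∨ g = E₁ ∨ g = E₂ := by
  obtain ⟨-, v, hv1, hv2⟩ := SimpleGraph.lineGraph_adj_iff_exists.1 hadj
  obtain ⟨a, b, hab⟩ := hf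
  rw [hab] at hv1
  rcases Sym2.mem_iff.1 hv1 with rfl | rfl
  · exact boundary hE₁ hi₁ hE₂ g a hv2
  · exact boundary hE₁ hi₁ hE₂ g b hv2

include hE₁ hi₁ hE₂ in
lemma stepO {f g : (Xkt k t).edgeSet} (hadj : (Xkt k t).lineGraph.Adj f g)
    (hf : f ∉ SS i j ∧ f ≠ E₁ ∧ f ≠ E₂) :
    g = E₁ ∨ g = E₂ ∨ (g ∉ SS i j ∧ g ≠ E₁ ∧ g ≠ E₂) := by
  by_cases h1 : g = E₁
  · exact Or.inl h1
  by_cases h2 : g = E₂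
  · exact Or.inr (Or.inl h2)
  refine Or.inr (Or.inr ⟨fun hg => ?_, h1, h2⟩)
  rcases stepS hE₁ hi₁ hE₂ hadj.symm hg with h | h | h
  · exact hf.1 h
  · exact hf.2.1 h
  · exact hf.2.2 h

end Cut


section Conf
variable {W : Type*} {G : SimpleGraph W}

lemma path_loop_eq_nil {a : W} {w : G.Walk a a} (hw : w.IsPath) : w = SimpleGraph.Walk.nil := by
  cases w with
  | nil => rfl
  | cons h r =>
    rw [SimpleGraph.Walk.cons_isPath_iff] at hw
    exact (hw.2 r.end_mem_support).elim

lemma confineA (A B : W) (P : Set W)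
    (hstep : ∀ f g, G.Adj f g → f ∈ P → g = A ∨ g = B ∨ g ∈ P) :
    ∀ {a b : W} (w : G.Walk a b), a ∈ P → A ∉ w.support → B ∉ w.support →
      ∀ v ∈ w.support, v ∈ P := by
  intro a b w
  induction w with
  | nil =>
    intro ha _ _ v hv
    rw [SimpleGraph.Walk.support_nil, List.mem_singleton] at hv
    exact hv ▸ ha
  | @cons a c b h w ih =>
    intro ha hA hB v hv
    rw [SimpleGraph.Walk.support_cons, List.mem_cons] at hv hA hB
    push_neg at hA hB
    rcases hv with rfl | hv
    · exact ha
    · rcases hstep a c h ha with rfl | rfl | hP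
      · exact (hA.2 w.start_mem_support).elim
      · exact (hB.2 w.start_mem_support).elim
      · exact ih hP hA.2 hB.2 v hv

lemma confineB' (A B : W) (P : Set W)
    (hstep : ∀ f g, G.Adj f g → f ∈ P → g = A ∨ g = B ∨ g ∈ P) :
    ∀ {a bb : W} (w : G.Walk a bb), bb = B → w.IsPath → a ∈ P → A ∉ w.support →
      ∀ v ∈ w.support, v ∈ P ∨ v = B := by
  intro a bb w
  induction w with
  | nil =>
    intro hbb _ ha _ v hv
    rw [SimpleGraph.Walk.support_nil, List.mem_singleton] at hv
    exact Or.inl (hv ▸ ha)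
  | @cons a c b h w ih =>
    intro hbb hp ha hA v hv
    rw [SimpleGraph.Walk.support_cons, List.mem_cons] at hv hA
    push_neg at hA
    rcases hv with rfl | hv
    · exact Or.inl ha
    · subst hbb
      rcases hstep a c h ha with rfl | rfl | hP
      · exact (hA.2 w.start_mem_support).elim
      · have : w = SimpleGraph.Walk.nil :=
          path_loop_eq_nil ((SimpleGraph.Walk.cons_isPath_iff _ _).1 hp).1
        subst this
        rw [SimpleGraph.Walk.support_nil, List.mem_singleton] at hv
        exact Or.inr hv
      · exact ih rfl ((SimpleGraph.Walk.cons_isPath_iff _ _).1 hp).1 hP hA.2 v hv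

lemma confineB (A B : W) (P : Set W)
    (hstep : ∀ f g, G.Adj f g → f ∈ P → g = A ∨ g = B ∨ g ∈ P)
    {a : W} (w : G.Walk a B) (hp : w.IsPath) (ha : a ∈ P) (hA : A ∉ w.support) :
    ∀ v ∈ w.support, v ∈ P ∨ v = B :=
  confineB' A B P hstep w rfl hp ha hA

end Conf

section Cut2
variable {k t : ℕ} (hk : 3 ≤ k) (ht : 4 ≤ t) (hte : Even t)
  {i : Fin t} (hi : (i : ℕ) % 2 = 0) {j : Fin (mult k i)}
  {E₁ E₂ : (Xkt k t).edgeSet}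
  (hE₁ : (E₁ : Sym2 (XktVert k t)) = s(Sum.inl i, Sum.inr (⟨i, j⟩, (0 : Fin (k + 1)))))
  {i₁ : Fin t} (hi₁ : (i₁ : ℕ) = ((i : ℕ) + 1) % t)
  (hE₂ : (E₂ : Sym2 (XktVert k t)) =
    s(Sum.inl i₁, Sum.inr (⟨i, j⟩, (1 : Fin (k + 1)))))

lemma sym2_ne01 {a b : Fin (k+1)} (hk : 3 ≤ k) (h1 : ¬((a : ℕ) = 0 ∧ (b : ℕ) = 1))
    (h2 : ¬((a : ℕ) = 1 ∧ (b : ℕ) = 0)) : s(a, b) ≠ s((0 : Fin (k+1)), 1) := by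
  intro h
  rw [Sym2.eq_iff] at h
  rcases h with ⟨ha, hb⟩ | ⟨ha, hb⟩
  · exact h1 ⟨by rw [ha, Fin.val_zero], by rw [hb, fin_val_one hk]⟩
  · exact h2 ⟨by rw [ha, fin_val_one hk], by rw [hb, Fin.val_zero]⟩

include hk hE₁ hE₂ in
lemma s0_exists : ∃ s0 : (Xkt k t).edgeSet, s0 ∈ SS i j ∧ s0 ≠ E₁ ∧ s0 ≠ E₂ := by
  have h2 : 2 < k + 1 := by omega
  have hadj : (Xkt k t).Adj (Sum.inr (⟨i, j⟩, 0)) (Sum.inr (⟨i, j⟩, ⟨2, h2⟩)) := by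
    refine xkt_adj_gadget _ (Fin.ne_of_val_ne (by simp)) (sym2_ne01 hk (by simp) (by simp))
  refine ⟨⟨s(Sum.inr (⟨i, j⟩, 0), Sum.inr (⟨i, j⟩, ⟨2, h2⟩)), hadj⟩, ⟨0, ⟨2, h2⟩, rfl⟩, ?_, ?_⟩
  · intro h
    have h' := congrArg Subtype.val h
    erw [hE₁, Sym2.eq_iff] at h'
    rcases h' with ⟨h1, -⟩ | ⟨-, h1⟩ <;> cases h1
  · intro h
    have h' := congrArg Subtype.val h
    erw [hE₂, Sym2.eq_iff] at h'
    rcases h' with ⟨h1, -⟩ | ⟨-, h1⟩ <;> cases h1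

include hk hte hi hi₁ hE₁ hE₂ in
lemma o0_exists : ∃ o0 : (Xkt k t).edgeSet, o0 ∉ SS i j ∧ o0 ≠ E₁ ∧ o0 ≠ E₂ := by
  have h2 : 2 < k + 1 := by omega
  set g : Σ i' : Fin t, Fin (mult k i') := ⟨i₁, ⟨0, mult_pos hk i₁⟩⟩ with hg
  have hadj : (Xkt k t).Adj (Sum.inr (g, 0)) (Sum.inr (g, ⟨2, h2⟩)) := by
    refine xkt_adj_gadget _ (Fin.ne_of_val_ne (by simp)) (sym2_ne01 hk (by simp) (by simp))
  have hii : i₁ ≠ i := (i_ne_i1 hte hi hi₁).symm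
  refine ⟨⟨s(Sum.inr (g, 0), Sum.inr (g, ⟨2, h2⟩)), hadj⟩, ?_, ?_, ?_⟩
  · rintro ⟨a, b, hab⟩
    erw [Sym2.eq_iff] at hab
    rcases hab with ⟨h1, -⟩ | ⟨h1, -⟩ <;>
    · have := congrArg Sigma.fst (congrArg Prod.fst (Sum.inr.inj h1))
      exact hii this
  · intro h
    have h' := congrArg Subtype.val h
    erw [hE₁, Sym2.eq_iff] at h'
    rcases h' with ⟨h1, -⟩ | ⟨-, h1⟩ <;> cases h1
  · intro h
    have h' := congrArg Subtype.val h
    erw [hE₂, Sym2.eq_iff] at h'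
    rcases h' with ⟨h1, -⟩ | ⟨-, h1⟩ <;> cases h1

include hk ht hte hi hi₁ hE₁ hE₂ in
lemma not_connected_induced :
    ¬ ((Xkt k t).lineGraph.induce ({E₁, E₂} : Set (Xkt k t).edgeSet)ᶜ).Connected := by
  obtain ⟨s0, hs0S, hs01, hs02⟩ := s0_exists hk hE₁ hE₂
  obtain ⟨o0, ho0S, ho01, ho02⟩ := o0_exists hk hte hi hE₁ hi₁ hE₂
  intro hcon
  have hs0' : s0 ∈ ({E₁, E₂}ᶜ : Set (Xkt k t).edgeSet) := by simp [hs01, hs02]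
  have ho0' : o0 ∈ ({E₁, E₂}ᶜ : Set (Xkt k t).edgeSet) := by simp [ho01, ho02]
  obtain ⟨w⟩ := hcon.preconnected ⟨s0, hs0'⟩ ⟨o0, ho0'⟩
  suffices claim : ∀ {x y : ({E₁, E₂}ᶜ : Set (Xkt k t).edgeSet)}
      (w : ((Xkt k t).lineGraph.induce ({E₁, E₂} : Set (Xkt k t).edgeSet)ᶜ).Walk x y),
      x.val ∈ SS i j → y.val ∈ SS i j by
    exact ho0S (claim w hs0S)
  intro x y w
  induction w with
  | nil => exact id
  | @cons x c y h w ih =>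
    intro hx
    apply ih
    have hadj : (Xkt k t).lineGraph.Adj x.val c.val := h
    have hc := c.2
    simp only [Set.mem_compl_iff, Set.mem_insert_iff, Set.mem_singleton_iff] at hc
    push_neg at hc
    rcases stepS hE₁ hi₁ hE₂ hadj hx with h' | h' | h'
    · exact h'
    · exact (hc.1 h').elim
    · exact (hc.2 h').elim

end Cut2

section Ham
variable {k t : ℕ} (hk : 3 ≤ k) (ht : 4 ≤ t) (hte : Even t)
  {i : Fin t} (hi : (i : ℕ) % 2 = 0) {j : Fin (mult k i)}
  {E₁ E₂ : (Xkt k t).edgeSet}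
  (hE₁ : (E₁ : Sym2 (XktVert k t)) = s(Sum.inl i, Sum.inr (⟨i, j⟩, (0 : Fin (k + 1)))))
  {i₁ : Fin t} (hi₁ : (i₁ : ℕ) = ((i : ℕ) + 1) % t)
  (hE₂ : (E₂ : Sym2 (XktVert k t)) =
    s(Sum.inl i₁, Sum.inr (⟨i, j⟩, (1 : Fin (k + 1)))))

include hk hE₁ hi₁ hE₂ in
lemma shape_of (f : (Xkt k t).edgeSet) (hf : f ∈ SS i j)
    (hadj : (Xkt k t).lineGraph.Adj E₁ f) :
    ∃ b : Fin (k + 1), b ≠ 0 ∧ (f : Sym2 (XktVert k t)) =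
      s(Sum.inr (⟨i, j⟩, (0 : Fin (k + 1))), Sum.inr (⟨i, j⟩, b)) := by
  obtain ⟨a, b, hab⟩ := hf
  obtain ⟨-, v, hv1, hv2⟩ := SimpleGraph.lineGraph_adj_iff_exists.1 hadj
  rw [hE₁] at hv1; rw [hab] at hv2
  have hadj' : (Xkt k t).Adj (Sum.inr (⟨i, j⟩, a)) (Sum.inr (⟨i, j⟩, b)) := by
    have h2 : (f : Sym2 (XktVert k t)) ∈ (Xkt k t).edgeSet := f.2
    rw [hab] at h2
    exact h2
  have hne : a ≠ b := by
    intro h; subst h; exact hadj'.ne rfl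
  rcases Sym2.mem_iff.1 hv1 with rfl | rfl
  · rcases Sym2.mem_iff.1 hv2 with h | h <;> cases h
  · rcases Sym2.mem_iff.1 hv2 with h | h
    · have ha : (0 : Fin (k+1)) = a := (Prod.ext_iff.1 (Sum.inr.inj h)).2
      refine ⟨b, fun hb => hne (by rw [← ha, hb]), by rw [hab, ← ha]⟩
    · have hb : (0 : Fin (k+1)) = b := (Prod.ext_iff.1 (Sum.inr.inj h)).2
      refine ⟨a, fun ha => hne (by rw [← hb, ha]), by rw [hab, ← hb, Sym2.eq_swap]⟩

include hk ht hte hi hE₁ hi₁ hE₂ in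
lemma ham_key [idec : DecidableEq ((Xkt k t).edgeSet : Type)]
    {x0 : (Xkt k t).edgeSet} {c : (Xkt k t).lineGraph.Walk x0 x0}
    (hc : c.IsHamiltonianCycle) :
    ∃! f : (Xkt k t).edgeSet, f ∈ SS i j ∧ s(E₁, f) ∈ c.edges := by
  have hne12 : E₁ ≠ E₂ := E1_ne_E2 hte hi hE₁ hi₁ hE₂
  have hnadj : ¬ (Xkt k t).lineGraph.Adj E₁ E₂ := not_adj_E1_E2 hk hte hi hE₁ hi₁ hE₂
  have hE₂mem : E₂ ∈ c.support := hc.mem_support E₂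
  set c' := c.rotate E₂ hE₂mem with hc'def
  have hc'cyc : c'.IsCycle := hc.isCycle.rotate hE₂mem
  have hedges : ∀ e, e ∈ c'.edges ↔ e ∈ c.edges :=
    fun e => (SimpleGraph.Walk.rotate_edges c E₂ hE₂mem).mem_iff
  have hsupp : ∀ v, v ∈ c.support → v ∈ c'.support := by
    intro v hv
    have h1 : v ∈ c.support.tail :=
      closed_mem_support_tail hc.isCycle.ne_nil hv
    have h2 : v ∈ c'.support.tail :=
      (SimpleGraph.Walk.support_rotate c E₂ hE₂mem).mem_iff.2 h1
    exact List.mem_of_mem_tail h2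
  obtain ⟨y, hy, q, hq⟩ := walk_cons_of_ne_nil c' hc'cyc.ne_nil
  have hqpath : q.IsPath := ((SimpleGraph.Walk.cons_isCycle_iff q hy).1 (hq ▸ hc'cyc)).1
  have hyne : y ≠ E₁ := fun h => hnadj (by rw [← h]; exact hy.symm)
  have hE₁q : E₁ ∈ q.support := by
    have h1 : E₁ ∈ c'.support := hsupp E₁ (hc.mem_support E₁)
    rw [hq, SimpleGraph.Walk.support_cons, List.mem_cons] at h1
    exact h1.resolve_left hne12
  set p₁ := q.takeUntil E₁ hE₁q with hp₁def
  set p₂ := q.dropUntil E₁ hE₁q with hp₂def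
  have hqsplit : p₁.append p₂ = q := q.take_spec hE₁q
  have hp₁ : p₁.IsPath := hqpath.takeUntil hE₁q
  have hp₂ : p₂.IsPath := hqpath.dropUntil hE₁q
  obtain ⟨x, hx, r₁, hr₁⟩ := walk_cons_of_ne p₁.reverse hyne.symm
  obtain ⟨y₂, hy₂, r₂, hr₂⟩ := walk_cons_of_ne p₂ hne12
  have hr₂path : r₂.IsPath := ((SimpleGraph.Walk.cons_isPath_iff _ _).1 (hr₂ ▸ hp₂)).1
  have hsupq : q.support = p₁.support ++ p₂.support.tail := by
    rw [← hqsplit]; exact SimpleGraph.Walk.support_append _ _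
  have hnd : (p₁.support ++ p₂.support.tail).Nodup := by
    rw [← hsupq]; exact hqpath.support_nodup
  have hE₂t : E₂ ∈ p₂.support.tail := by
    rw [hr₂, SimpleGraph.Walk.support_cons, List.tail_cons]
    exact r₂.end_mem_support
  have hE₂notp₁ : E₂ ∉ p₁.support := fun h => (List.nodup_append.1 hnd).2.2 _ h _ hE₂t rfl
  have hE₁notr₁ : E₁ ∉ r₁.support :=
    ((SimpleGraph.Walk.cons_isPath_iff _ _).1 (hr₁ ▸ hp₁.reverse)).2
  have hE₁notr₂ : E₁ ∉ r₂.support :=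
    ((SimpleGraph.Walk.cons_isPath_iff _ _).1 (hr₂ ▸ hp₂)).2
  have hr₁sub : ∀ v ∈ r₁.support, v ∈ p₁.support := by
    intro v hv
    have h1 : v ∈ p₁.reverse.support := by
      rw [hr₁, SimpleGraph.Walk.support_cons]; exact List.mem_cons_of_mem _ hv
    rwa [SimpleGraph.Walk.support_reverse, List.mem_reverse] at h1
  have hE₂notr₁ : E₂ ∉ r₁.support := fun h => hE₂notp₁ (hr₁sub _ h)
  have hxE₁ : x ≠ E₁ := hx.ne'
  have hy₂E₁ : y₂ ≠ E₁ := hy₂.ne'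
  have hxE₂ : x ≠ E₂ := fun h => hnadj (h ▸ hx)
  have hy₂E₂ : y₂ ≠ E₂ := fun h => hnadj (h ▸ hy₂)
  -- coverage of support
  have hcover : ∀ v, v ∈ c.support →
      v = E₂ ∨ v = E₁ ∨ v ∈ r₁.support ∨ v ∈ r₂.support := by
    intro v hv
    have h1 : v ∈ c'.support := hsupp v hv
    rw [hq, SimpleGraph.Walk.support_cons, List.mem_cons] at h1
    rcases h1 with rfl | h1
    · exact Or.inl rfl
    rw [hsupq, List.mem_append] at h1
    rcases h1 with h1 | h1
    · have h2 : v ∈ p₁.reverse.support := by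
        rwa [SimpleGraph.Walk.support_reverse, List.mem_reverse]
      rw [hr₁, SimpleGraph.Walk.support_cons, List.mem_cons] at h2
      rcases h2 with rfl | h2
      · exact Or.inr (Or.inl rfl)
      · exact Or.inr (Or.inr (Or.inl h2))
    · rw [hr₂, SimpleGraph.Walk.support_cons, List.tail_cons] at h1
      exact Or.inr (Or.inr (Or.inr h1))
  -- step lemmas in confinement form
  have hstepS' : ∀ f g, (Xkt k t).lineGraph.Adj f g → f ∈ SS i j →
      g = E₁ ∨ g = E₂ ∨ g ∈ SS i j := by
    intro f g hadj hf
    rcases stepS hE₁ hi₁ hE₂ hadj hf with h | h | h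
    · exact Or.inr (Or.inr h)
    · exact Or.inl h
    · exact Or.inr (Or.inl h)
  have hstepO' : ∀ f g, (Xkt k t).lineGraph.Adj f g →
      f ∈ {f : (Xkt k t).edgeSet | f ∉ SS i j ∧ f ≠ E₁ ∧ f ≠ E₂} →
      g = E₁ ∨ g = E₂ ∨ g ∈ {f : (Xkt k t).edgeSet | f ∉ SS i j ∧ f ≠ E₁ ∧ f ≠ E₂} := by
    intro f g hadj hf
    exact stepO hE₁ hi₁ hE₂ hadj hf
  -- membership of the two candidate edges
  have hmx2 : s(E₁, x) ∈ p₁.edges := by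
    have h1 : s(E₁, x) ∈ p₁.reverse.edges := by
      rw [hr₁, SimpleGraph.Walk.edges_cons]; exact List.mem_cons_self
    rwa [SimpleGraph.Walk.edges_reverse, List.mem_reverse] at h1
  have hmemq : ∀ e, e ∈ p₁.edges ∨ e ∈ p₂.edges → e ∈ c.edges := by
    intro e he
    refine (hedges e).1 ?_
    rw [hq, SimpleGraph.Walk.edges_cons]
    refine List.mem_cons_of_mem _ ?_
    rw [← hqsplit, SimpleGraph.Walk.edges_append, List.mem_append]
    exact he
  have hmemx : s(E₁, x) ∈ c.edges := hmemq _ (Or.inl hmx2)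
  have hmemy₂ : s(E₁, y₂) ∈ c.edges := by
    refine hmemq _ (Or.inr ?_)
    rw [hr₂, SimpleGraph.Walk.edges_cons]
    exact List.mem_cons_self
  -- classification of cycle edges at E₁
  have hclass : ∀ f', s(E₁, f') ∈ c.edges → f' = x ∨ f' = y₂ := by
    intro f' hf'
    have h1 : s(E₁, f') ∈ c'.edges := (hedges _).2 hf'
    rw [hq, SimpleGraph.Walk.edges_cons, List.mem_cons] at h1
    rcases h1 with h1 | h1
    · exfalso
      rw [Sym2.eq_iff] at h1
      rcases h1 with ⟨h2, -⟩ | ⟨h2, -⟩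
      · exact hne12 h2
      · exact hyne h2.symm
    rw [← hqsplit, SimpleGraph.Walk.edges_append, List.mem_append] at h1
    rcases h1 with h1 | h1
    · obtain ⟨x', hx', r', heq', hee⟩ :=
        path_end_edge hp₁ h1 (Sym2.mem_mk_left E₁ f')
      have hxx : x' = x := by
        have h2 := congrArg SimpleGraph.Walk.support (heq'.symm.trans hr₁)
        rw [SimpleGraph.Walk.support_cons, SimpleGraph.Walk.support_cons] at h2
        have h3 := congrArg List.tail h2
        rw [List.tail_cons, List.tail_cons] at h3
        rw [SimpleGraph.Walk.support_eq_cons r', SimpleGraph.Walk.support_eq_cons r₁] at h3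
        exact (List.cons.injEq _ _ _ _ ▸ h3).1
      rw [hxx] at hee
      exact Or.inl (Sym2.congr_right.1 hee)
    · obtain ⟨x', hx', r', heq', hee⟩ :=
        path_start_edge hp₂ h1 (Sym2.mem_mk_left E₁ f')
      have hxx : x' = y₂ := by
        have h2 := congrArg SimpleGraph.Walk.support (heq'.symm.trans hr₂)
        rw [SimpleGraph.Walk.support_cons, SimpleGraph.Walk.support_cons] at h2
        have h3 := congrArg List.tail h2
        rw [List.tail_cons, List.tail_cons] at h3
        rw [SimpleGraph.Walk.support_eq_cons r', SimpleGraph.Walk.support_eq_cons r₂] at h3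
        exact (List.cons.injEq _ _ _ _ ▸ h3).1
      rw [hxx] at hee
      exact Or.inr (Sym2.congr_right.1 hee)
  -- dichotomy
  by_cases hxS : x ∈ SS i j <;> by_cases hy₂S : y₂ ∈ SS i j
  · -- both inside: contradiction via o0
    exfalso
    obtain ⟨o0, ho0S, ho01, ho02⟩ := o0_exists hk hte hi hE₁ hi₁ hE₂
    rcases hcover o0 (hc.mem_support o0) with h | h | h | h
    · exact ho02 h
    · exact ho01 h
    · exact ho0S (confineA E₁ E₂ (SS i j) hstepS' r₁ hxS hE₁notr₁ hE₂notr₁ o0 h)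
    · rcases confineB E₁ E₂ (SS i j) hstepS' r₂ hr₂path hy₂S hE₁notr₂ o0 h with h' | h'
      · exact ho0S h'
      · exact ho02 h'
  · -- x in, y₂ out : unique f is x
    refine ⟨x, ⟨hxS, hmemx⟩, ?_⟩
    rintro f' ⟨hf'S, hf'e⟩
    rcases hclass f' hf'e with rfl | rfl
    · rfl
    · exact (hy₂S hf'S).elim
  · -- x out, y₂ in : unique f is y₂
    refine ⟨y₂, ⟨hy₂S, hmemy₂⟩, ?_⟩
    rintro f' ⟨hf'S, hf'e⟩
    rcases hclass f' hf'e with rfl | rfl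
    · exact (hxS hf'S).elim
    · rfl
  · -- both outside: contradiction via s0
    exfalso
    obtain ⟨s0, hs0S, hs01, hs02⟩ := s0_exists hk hE₁ hE₂
    rcases hcover s0 (hc.mem_support s0) with h | h | h | h
    · exact hs02 h
    · exact hs01 h
    · exact (confineA E₁ E₂ _ hstepO' r₁ ⟨hxS, hxE₁, hxE₂⟩ hE₁notr₁ hE₂notr₁ s0 h).1 hs0S
    · rcases confineB E₁ E₂ _ hstepO' r₂ hr₂path ⟨hy₂S, hy₂E₁, hy₂E₂⟩ hE₁notr₂ s0 h with h' | h'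
      · exact h'.1 hs0S
      · exact hs02 h'

end Ham

/-- In `X_{k,t}` (`k ≥ 3`, even `t ≥ 4`), for each (`0`-indexed) even `i`
and each `j`, the pair `{eᵢʲ, eᵢ₊₁ʲ}` of connecting edges of the inserted copy `Xᵢʲ` is a
vertex cut of `L(X_{k,t})`; consequently, in any Hamilton decomposition of `L(X_{k,t})`, each
Hamilton cycle contains exactly one of the `k-1` edges of `L(X_{k,t})` joining `eᵢʲ` to the
`k-1` edges of `Xᵢʲ` adjacent to `eᵢʲ`. -/
theorem vertex_cut_and_unique_gadget_edge (k t : ℕ) (hk : 3 ≤ k) (ht : 4 ≤ t)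
    (hte : Even t) (i : Fin t) (hi : (i : ℕ) % 2 = 0) (j : Fin (mult k i))
    (E₁ E₂ : (Xkt k t).edgeSet)
    (hE₁ : (E₁ : Sym2 (XktVert k t)) = s(Sum.inl i, Sum.inr (⟨i, j⟩, (0 : Fin (k + 1)))))
    (i₁ : Fin t) (hi₁ : (i₁ : ℕ) = ((i : ℕ) + 1) % t)
    (hE₂ : (E₂ : Sym2 (XktVert k t)) =
      s(Sum.inl i₁, Sum.inr (⟨i, j⟩, (1 : Fin (k + 1))))) :
    IsVertexCut (Xkt k t).lineGraph {E₁, E₂} ∧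
      ∀ (x : Fin (k - 1) → (Xkt k t).edgeSet)
        (c : ∀ m, (Xkt k t).lineGraph.Walk (x m) (x m)),
        IsHamDecompFam (Xkt k t).lineGraph x c →
        ∀ m : Fin (k - 1), ∃! f : (Xkt k t).edgeSet,
          (∃ b : Fin (k + 1), b ≠ 0 ∧ (f : Sym2 (XktVert k t)) =
            s(Sum.inr (⟨i, j⟩, (0 : Fin (k + 1))), Sum.inr (⟨i, j⟩, b))) ∧
          s(E₁, f) ∈ (c m).edges := by
  constructor
  · exact ⟨lineGraph_connected (xkt_connected hk ht).preconnected ⟨E₁⟩,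
      not_connected_induced hk ht hte hi hE₁ hi₁ hE₂⟩
  · intro x c hfam m
    obtain ⟨f, ⟨hfS, hfe⟩, huniq⟩ := ham_key (idec := fun a b => Classical.propDecidable (a = b)) hk ht hte hi hE₁ hi₁ hE₂ (hfam.1 m)
    have hadjf : (Xkt k t).lineGraph.Adj E₁ f :=
      SimpleGraph.Walk.adj_of_mem_edges _ hfe
    refine ⟨f, ⟨shape_of hk hE₁ hi₁ hE₂ f hfS hadjf, hfe⟩, ?_⟩
    rintro f' ⟨⟨b, hb, hf'⟩, hf'e⟩
    exact huniq f' ⟨⟨0, b, hf'⟩, hf'e⟩
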